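/- Let a ∈ ℝ, δ > 0, and N ∈ ℕ with a − (nπ)² < −δ for all n > N; let L ∈ ℝ^{N+1}, C = (1, √2, …, √2) ∈ ℝ^{1×(N+1)}, A = diag(a − (0π)², …, a − (Nπ)²), and suppose there is a symmetric positive-definite Q with Q(A+LC) + (A+LC)ᵀQ + 2δQ negative definite. Let (c_n)_{n≥0} be square-summable and let ẽ_n : [0,∞) → ℝ, n ≥ 0, satisfy: ẽ_n(0) = c_n for all n; ẽ_n(t) = c_n e^{(a−(nπ)²)t} for all n > N and t ≥ 0; and ē = (ẽ₀,…,ẽ_N) is continuous on [0,∞) and differentiable on (0,∞) with ē̇(t) = (A+LC)ē(t) + L ζ(t), where ζ(t) = √2 Σ_{n>N} ẽ_n(t). Then there exists M₂ > 0, depending only on a, δ, N, L, Q, such that (Σ_{n≥0} ẽ_n(t)²)^{1/2} ≤ M₂ e^{−δt} (Σ_{n≥0} c_n²)^{1/2} for all t ≥ 0. -/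

import Mathlib

open Matrix

section helpers

lemma posdef_lower {k : ℕ} (S : Matrix (Fin (k+1)) (Fin (k+1)) ℝ) (hS : S.PosDef) :
    ∃ m > 0, ∀ x : Fin (k+1) → ℝ, m * (x ⬝ᵥ x) ≤ x ⬝ᵥ S.mulVec x := by
  have hf : Continuous (fun x : Fin (k+1) → ℝ => x ⬝ᵥ S.mulVec x) := by
    simp only [dotProduct, Matrix.mulVec]
    apply continuous_finset_sum
    intro i _
    exact (continuous_apply i).mul
      (continuous_finset_sum _ fun j _ => continuous_const.mul (continuous_apply j))
  have hsph : (Metric.sphere (0 : Fin (k+1) → ℝ) 1).Nonempty :=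
    NormedSpace.sphere_nonempty.2 zero_le_one
  obtain ⟨x₀, hx₀s, hx₀min⟩ :=
    (isCompact_sphere (0 : Fin (k+1) → ℝ) 1).exists_isMinOn hsph hf.continuousOn
  have hx₀norm : ‖x₀‖ = 1 := by simpa using hx₀s
  have hx₀ne : x₀ ≠ 0 := by
    intro h; rw [h] at hx₀norm; simp at hx₀norm
  have hm₀ : 0 < x₀ ⬝ᵥ S.mulVec x₀ := by
    have := hS.re_dotProduct_pos (x := x₀) hx₀ne
    simpa using this
  set m₀ := x₀ ⬝ᵥ S.mulVec x₀ with hm₀def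
  refine ⟨m₀ / (k+1), by positivity, fun x => ?_⟩
  rcases eq_or_ne x 0 with rfl | hx
  · simp
  · have hr : (0:ℝ) < ‖x‖ := norm_pos_iff.2 hx
    set u : Fin (k+1) → ℝ := ‖x‖⁻¹ • x with hu
    have hus : u ∈ Metric.sphere (0 : Fin (k+1) → ℝ) 1 := by
      simp [hu, norm_smul, abs_of_pos (inv_pos.2 hr), inv_mul_cancel₀ hr.ne']
    have hmin : m₀ ≤ u ⬝ᵥ S.mulVec u := hx₀min hus
    have hquad : u ⬝ᵥ S.mulVec u = ‖x‖⁻¹ * ‖x‖⁻¹ * (x ⬝ᵥ S.mulVec x) := by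
      simp [hu, Matrix.mulVec_smul, smul_dotProduct, dotProduct_smul, smul_eq_mul]
      ring
    have h1 : m₀ * (‖x‖ * ‖x‖) ≤ x ⬝ᵥ S.mulVec x := by
      have hthis := hmin
      rw [hquad] at hthis
      have h2 : m₀ * (‖x‖ * ‖x‖) ≤ (‖x‖⁻¹ * ‖x‖⁻¹ * (x ⬝ᵥ S.mulVec x)) * (‖x‖ * ‖x‖) := by
        nlinarith [sq_nonneg ‖x‖, mul_pos hr hr]
      calc m₀ * (‖x‖ * ‖x‖) ≤ _ := h2
        _ = x ⬝ᵥ S.mulVec x := by field_simp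
    have hxx : x ⬝ᵥ x ≤ (k+1) * (‖x‖ * ‖x‖) := by
      have : ∀ i, x i * x i ≤ ‖x‖ * ‖x‖ := fun i => by
        have h := norm_le_pi_norm x i
        have : |x i| ≤ ‖x‖ := by simpa using h
        nlinarith [abs_nonneg (x i), le_abs_self (x i), neg_abs_le (x i)]
      calc x ⬝ᵥ x = ∑ i, x i * x i := rfl
        _ ≤ ∑ _i : Fin (k+1), ‖x‖ * ‖x‖ := Finset.sum_le_sum (fun i _ => this i)
        _ = (k+1) * (‖x‖ * ‖x‖) := by simp [Finset.sum_const]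
    calc m₀ / (k+1) * (x ⬝ᵥ x) ≤ m₀ / (k+1) * ((k+1) * (‖x‖ * ‖x‖)) := by
          apply mul_le_mul_of_nonneg_left hxx (by positivity)
      _ = m₀ * (‖x‖ * ‖x‖) := by field_simp
      _ ≤ x ⬝ᵥ S.mulVec x := h1

lemma quad_upper {k : ℕ} (S : Matrix (Fin (k+1)) (Fin (k+1)) ℝ) (x : Fin (k+1) → ℝ) :
    x ⬝ᵥ S.mulVec x ≤ (∑ i, ∑ j, |S i j|) * (x ⬝ᵥ x) := by
  have hx2 : ∀ i, x i ^ 2 ≤ x ⬝ᵥ x := by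
    intro i
    have : x i * x i ≤ ∑ j, x j * x j :=
      Finset.single_le_sum (f := fun j => x j * x j) (fun j _ => mul_self_nonneg _)
        (Finset.mem_univ i)
    simpa [sq, dotProduct] using this
  have hpt : ∀ i j, x i * (S i j * x j) ≤ |S i j| * (x ⬝ᵥ x) := by
    intro i j
    have h1 : x i * (S i j * x j) ≤ |S i j| * (|x i| * |x j|) := by
      calc x i * (S i j * x j) ≤ |x i * (S i j * x j)| := le_abs_self _
        _ = |S i j| * (|x i| * |x j|) := by rw [abs_mul, abs_mul]; ring
    have h2 : |x i| * |x j| ≤ x ⬝ᵥ x := by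
      nlinarith [hx2 i, hx2 j, sq_abs (x i), sq_abs (x j), abs_nonneg (x i), abs_nonneg (x j),
        sq_nonneg (|x i| - |x j|)]
    calc x i * (S i j * x j) ≤ |S i j| * (|x i| * |x j|) := h1
      _ ≤ |S i j| * (x ⬝ᵥ x) := mul_le_mul_of_nonneg_left h2 (abs_nonneg _)
  calc x ⬝ᵥ S.mulVec x = ∑ i, ∑ j, x i * (S i j * x j) := by
        simp only [dotProduct, Matrix.mulVec, Finset.mul_sum]
    _ ≤ ∑ i, ∑ j, |S i j| * (x ⬝ᵥ x) :=
        Finset.sum_le_sum fun i _ => Finset.sum_le_sum fun j _ => hpt i j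
    _ = (∑ i, ∑ j, |S i j|) * (x ⬝ᵥ x) := by rw [Finset.sum_mul]; congr 1; ext i; rw [Finset.sum_mul]

lemma mulVec_dot {k : ℕ} (A : Matrix (Fin (k+1)) (Fin (k+1)) ℝ) (x y : Fin (k+1) → ℝ) :
    (A.mulVec x) ⬝ᵥ y = x ⬝ᵥ (Aᵀ.mulVec y) := by
  rw [dotProduct_comm, Matrix.dotProduct_mulVec, ← Matrix.mulVec_transpose,
    dotProduct_comm]

lemma tsum_cs {ι : Type*} (f g : ι → ℝ) (hf : Summable fun i => f i ^ 2)
    (hg : Summable fun i => g i ^ 2) :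
    (∑' i, |f i| * |g i|) ^ 2 ≤ (∑' i, f i ^ 2) * (∑' i, g i ^ 2) := by
  have hfg : Summable fun i => |f i| * |g i| := by
    apply Summable.of_nonneg_of_le (fun i => by positivity)
      (fun i => ?_) ((hf.add hg).div_const 2)
    have h := sq_nonneg (|f i| - |g i|)
    have h1 : |f i|^2 = f i ^2 := sq_abs _
    have h2 : |g i|^2 = g i ^2 := sq_abs _
    nlinarith
  have hA : (0:ℝ) ≤ ∑' i, f i ^ 2 := tsum_nonneg fun i => sq_nonneg _
  have hB : (0:ℝ) ≤ ∑' i, g i ^ 2 := tsum_nonneg fun i => sq_nonneg _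
  have key : (∑' i, |f i| * |g i|) ≤ Real.sqrt ((∑' i, f i ^ 2) * (∑' i, g i ^ 2)) := by
    apply Summable.tsum_le_of_sum_le hfg
    intro s
    have h1 : (∑ i ∈ s, |f i| * |g i|) ^ 2 ≤ (∑ i ∈ s, |f i| ^ 2) * ∑ i ∈ s, |g i| ^ 2 :=
      Finset.sum_mul_sq_le_sq_mul_sq s _ _
    have h2 : (∑ i ∈ s, |f i| ^ 2) ≤ ∑' i, f i ^ 2 := by
      simp only [sq_abs]
      exact Summable.sum_le_tsum s (fun i _ => sq_nonneg _) hf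
    have h3 : (∑ i ∈ s, |g i| ^ 2) ≤ ∑' i, g i ^ 2 := by
      simp only [sq_abs]
      exact Summable.sum_le_tsum s (fun i _ => sq_nonneg _) hg
    have h4 : (∑ i ∈ s, |f i| * |g i|) ^ 2 ≤ (∑' i, f i ^ 2) * (∑' i, g i ^ 2) := by
      calc (∑ i ∈ s, |f i| * |g i|) ^ 2 ≤ (∑ i ∈ s, |f i| ^ 2) * ∑ i ∈ s, |g i| ^ 2 := h1
        _ ≤ (∑' i, f i ^ 2) * (∑' i, g i ^ 2) := by
            apply mul_le_mul h2 h3 (Finset.sum_nonneg fun i _ => sq_nonneg _) hA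
    have h5 : (0:ℝ) ≤ ∑ i ∈ s, |f i| * |g i| := Finset.sum_nonneg fun i _ => by positivity
    calc (∑ i ∈ s, |f i| * |g i|) = Real.sqrt ((∑ i ∈ s, |f i| * |g i|)^2) := by
          rw [Real.sqrt_sq h5]
      _ ≤ Real.sqrt ((∑' i, f i ^ 2) * (∑' i, g i ^ 2)) := Real.sqrt_le_sqrt h4
  have h6 : (0:ℝ) ≤ ∑' i, |f i| * |g i| := tsum_nonneg fun i => by positivity
  calc (∑' i, |f i| * |g i|) ^ 2 ≤ (Real.sqrt ((∑' i, f i ^ 2) * (∑' i, g i ^ 2)))^2 := by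
        apply pow_le_pow_left₀ h6 key
    _ = (∑' i, f i ^ 2) * (∑' i, g i ^ 2) := Real.sq_sqrt (by positivity)

lemma summable_exp_quad (b t : ℝ) (ht : 0 < t) :
    Summable fun n : ℕ => Real.exp ((b - ((n:ℝ) * Real.pi) ^ 2) * t) := by
  set r := Real.exp (-(Real.pi ^ 2 * t)) with hr
  have hr1 : r < 1 := by
    rw [hr, Real.exp_lt_one_iff]
    have := Real.pi_pos
    simp only [neg_neg, Left.neg_neg_iff]
    positivity
  have hr0 : 0 ≤ r := Real.exp_nonneg _
  apply Summable.of_nonneg_of_le (fun n => Real.exp_nonneg _)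
    (fun n => ?_) ((summable_geometric_of_lt_one hr0 hr1).mul_left (Real.exp (b * t)))
  have h1 : ((n:ℝ) * Real.pi)^2 * t ≥ (n:ℝ) * (Real.pi^2 * t) := by
    have hn2 : (n:ℝ) ≤ (n:ℝ)^2 := by
      rcases Nat.eq_zero_or_pos n with rfl | hn
      · simp
      · have : (1:ℝ) ≤ (n:ℝ) := by exact_mod_cast hn
        nlinarith
    have hπ : (0:ℝ) < Real.pi ^ 2 * t := by positivity
    calc ((n:ℝ) * Real.pi)^2 * t = (n:ℝ)^2 * (Real.pi^2*t) := by ring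
      _ ≥ (n:ℝ) * (Real.pi^2*t) := by nlinarith
  calc Real.exp ((b - ((n:ℝ) * Real.pi) ^ 2) * t)
      = Real.exp (b*t) * Real.exp (-(((n:ℝ) * Real.pi)^2 * t)) := by
        rw [← Real.exp_add]; ring_nf
    _ ≤ Real.exp (b*t) * r ^ n := by
        apply mul_le_mul_of_nonneg_left _ (Real.exp_nonneg _)
        rw [hr, ← Real.exp_nat_mul]
        apply Real.exp_le_exp.2
        simp only [mul_neg, neg_le_neg_iff]
        exact h1

lemma summable_inv_quad (b : ℝ) (N : ℕ) (hb : ∀ n : ℕ, N < n → b < ((n:ℝ) * Real.pi)^2) :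
    Summable fun n : {n : ℕ // N < n} => (((n:ℝ) * Real.pi)^2 - b)⁻¹ := by
  set F : ℕ → ℝ := fun n => if N < n then (((n:ℝ) * Real.pi)^2 - b)⁻¹ else 0 with hF
  have hFs : Summable F := by
    set k := N + 1 + ⌈b⌉₊ + 1 with hk
    rw [← summable_nat_add_iff k]
    have base : Summable (fun n : ℕ => (((n:ℝ)+k)^2)⁻¹) := by
      have h0 : Summable (fun n : ℕ => (((n:ℝ))^2)⁻¹) := by
        simpa using Real.summable_one_div_nat_pow.2 (by norm_num : 1 < 2)
      have h1 := (summable_nat_add_iff (f := fun n : ℕ => (((n:ℝ))^2)⁻¹) k).2 h0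
      apply h1.congr
      intro n
      push_cast
      ring_nf
    apply Summable.of_nonneg_of_le _ _ base
    · intro n
      have := hb (n + k) (by omega)
      have h2 : (0:ℝ) < ((↑(n+k):ℝ) * Real.pi)^2 - b := by linarith
      have : F (n + k) = (((↑(n+k):ℝ) * Real.pi)^2 - b)⁻¹ := if_pos (by omega)
      rw [this]
      positivity
    · intro n
      have hc : ((↑(n+k):ℝ)) = (n:ℝ)+k := by push_cast; ring
      have hnk : (1:ℝ) ≤ ((n:ℝ)+k) := by
        have hk1 : (1:ℝ) ≤ (k:ℝ) := by exact_mod_cast (by omega : 1 ≤ k)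
        have h0 : (0:ℝ) ≤ (n:ℝ) := Nat.cast_nonneg n
        linarith
      have hbk : b ≤ ((n:ℝ)+k) := by
        have h1 : b ≤ (⌈b⌉₊ : ℝ) := Nat.le_ceil b
        have h2 : ((⌈b⌉₊:ℕ):ℝ) ≤ (k:ℝ) := by exact_mod_cast (by omega : ⌈b⌉₊ ≤ k)
        have h0 : (0:ℝ) ≤ (n:ℝ) := Nat.cast_nonneg n
        linarith
      have key : ((n:ℝ)+k)^2 ≤ ((↑(n+k):ℝ) * Real.pi)^2 - b := by
        have hπ : (3:ℝ) < Real.pi := Real.pi_gt_three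
        have hπ2 : (9:ℝ) < Real.pi^2 := by nlinarith
        rw [hc]
        nlinarith [mul_nonneg (le_of_lt (sub_pos.2 hπ2)) (sq_nonneg ((n:ℝ)+k))]
      have hFe : F (n + k) = (((↑(n+k):ℝ) * Real.pi)^2 - b)⁻¹ := if_pos (by omega)
      rw [hFe]
      apply inv_anti₀ (by positivity) key
  have := hFs.subtype {n : ℕ | N < n}
  apply this.congr
  intro ⟨n, hn⟩
  have hn' : N < n := hn
  simp only [Function.comp, hF, if_pos hn']

lemma hasDerivAt_G {ι : Type*} (lam : ι → ℝ) (Λ : ℝ) (hΛ : 0 < Λ)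
    (hlam : ∀ i, lam i ≤ -Λ)
    (hsum : ∀ s : ℝ, 0 < s → Summable fun i => Real.exp (2 * lam i * s))
    (t : ℝ) (ht : 0 < t) :
    HasDerivAt (fun s => ∑' i, Real.exp (2 * lam i * s) / (2 * lam i))
      (∑' i, Real.exp (2 * lam i * t)) t := by
  set ε := t / 2 with hε
  have hε0 : 0 < ε := by positivity
  have hεt : ε < t := by rw [hε]; linarith
  have hlamneg : ∀ i, lam i < 0 := fun i => lt_of_le_of_lt (hlam i) (by linarith)
  have hlamne : ∀ i, (2 * lam i) ≠ 0 := fun i => by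
    have := hlamneg i; intro h; nlinarith
  set F : ι → ℝ → ℝ := fun i u => Real.exp (2 * lam i * (ε + Real.exp u)) / (2 * lam i)
    with hFdef
  set F' : ι → ℝ → ℝ := fun i u => Real.exp u * Real.exp (2 * lam i * (ε + Real.exp u))
    with hF'def
  have hF : ∀ i u, HasDerivAt (F i) (F' i u) u := by
    intro i u
    have hg : HasDerivAt (fun u => 2 * lam i * (ε + Real.exp u)) (2 * lam i * Real.exp u) u :=
      ((Real.hasDerivAt_exp u).const_add ε).const_mul (2 * lam i)
    have h2 := (hg.exp).div_const (2 * lam i)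
    refine h2.congr_deriv ?_
    rw [hF'def]
    simp only
    rw [show Real.exp (2 * lam i * (ε + Real.exp u)) * (2 * lam i * Real.exp u)
        = (Real.exp u * Real.exp (2 * lam i * (ε + Real.exp u))) * (2 * lam i) by ring,
      mul_div_cancel_right₀ _ (hlamne i)]
  set u : ι → ℝ := fun i => Real.exp (2 * lam i * ε) / (2 * Λ) with hu
  have hbound : ∀ i y, ‖F' i y‖ ≤ u i := by
    intro i y
    have hv : 0 < Real.exp y := Real.exp_pos y
    set v := Real.exp y with hvdef
    set c := -(2 * lam i) with hc
    have hc0 : 2 * Λ ≤ c := by have := hlam i; rw [hc]; linarith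
    have hcpos : 0 < c := lt_of_lt_of_le (by linarith) hc0
    have key : v * Real.exp (-(c * v)) ≤ 1 / c := by
      have h1 : c * v ≤ Real.exp (c * v) := by
        have := Real.add_one_le_exp (c * v); linarith
      have h2 : (c * v) * Real.exp (-(c * v)) ≤ Real.exp (c * v) * Real.exp (-(c * v)) :=
        mul_le_mul_of_nonneg_right h1 (Real.exp_nonneg _)
      have h3 : Real.exp (c * v) * Real.exp (-(c * v)) = 1 := by
        rw [← Real.exp_add]; simp
      rw [h3] at h2
      rw [le_div_iff₀ hcpos]
      nlinarith
    have expand : F' i y = Real.exp (2 * lam i * ε) * (v * Real.exp (-(c * v))) := by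
      rw [hF'def]
      simp only
      rw [show 2 * lam i * (ε + v) = 2 * lam i * ε + -(c * v) by rw [hc]; ring,
        Real.exp_add]
      ring
    have hnn : 0 ≤ F' i y := by rw [hF'def]; positivity
    rw [Real.norm_eq_abs, abs_of_nonneg hnn, expand, hu]
    have h4 : v * Real.exp (-(c * v)) ≤ 1 / (2 * Λ) := by
      apply le_trans key
      apply one_div_le_one_div_of_le (by linarith) hc0
    calc Real.exp (2 * lam i * ε) * (v * Real.exp (-(c * v)))
        ≤ Real.exp (2 * lam i * ε) * (1 / (2 * Λ)) :=
          mul_le_mul_of_nonneg_left h4 (Real.exp_nonneg _)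
      _ = Real.exp (2 * lam i * ε) / (2 * Λ) := by ring
  have husum : Summable u := (hsum ε hε0).div_const (2 * Λ)
  have hsum0 : Summable fun i => F i 0 := by
    apply Summable.of_abs
    apply Summable.of_nonneg_of_le (fun i => abs_nonneg _) _ husum
    intro i
    have hl := hlamneg i
    have hE : Real.exp (2 * lam i * (ε + Real.exp 0)) ≤ Real.exp (2 * lam i * ε) := by
      apply Real.exp_le_exp.2
      rw [Real.exp_zero]
      nlinarith
    rw [hFdef]
    simp only
    rw [abs_div, abs_of_pos (Real.exp_pos _), abs_of_neg (by nlinarith : 2 * lam i < 0)]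
    rw [hu]
    exact div_le_div₀ (Real.exp_nonneg _) hE (by linarith) (by have := hlam i; linarith)
  have hH := hasDerivAt_tsum husum hF hbound hsum0
  set ψ : ℝ → ℝ := fun s => Real.log (s - ε) with hψdef
  have htε : t - ε = ε := by rw [hε]; ring
  have hψ : HasDerivAt ψ ((t - ε)⁻¹ * 1) t := by
    have h1 : HasDerivAt (fun s : ℝ => s - ε) 1 t := (hasDerivAt_id t).sub_const ε
    have h0 : t - ε ≠ 0 := by rw [htε]; exact hε0.ne'
    exact (Real.hasDerivAt_log h0).comp t h1
  have hcomp := (hH (ψ t)).comp t hψ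
  have hexpψ : Real.exp (ψ t) = t - ε := Real.exp_log (by rw [htε]; exact hε0)
  have hder : (∑' i, F' i (ψ t)) * ((t - ε)⁻¹ * 1) = ∑' i, Real.exp (2 * lam i * t) := by
    have h1 : ∀ i, F' i (ψ t) = (t - ε) * Real.exp (2 * lam i * t) := by
      intro i
      rw [hF'def]
      simp only
      rw [hexpψ]
      congr 2
      ring
    rw [tsum_congr h1, tsum_mul_left]
    have h2 : t - ε ≠ 0 := by rw [htε]; exact hε0.ne'
    field_simp
  rw [hder] at hcomp
  apply hcomp.congr_of_eventuallyEq
  filter_upwards [isOpen_Ioi.mem_nhds hεt] with s hs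
  have hs' : (0:ℝ) < s - ε := by simp at hs; linarith
  show _ = (fun z => ∑' i, F i z) (ψ s)
  simp only [hFdef, hψdef]
  apply tsum_congr
  intro i
  rw [Real.exp_log hs']
  congr 2
  ring

end helpers

/-- The diagonal matrix `A = diag(a - (0π)², …, a - (Nπ)²)`. -/
noncomputable def Amat (N : ℕ) (a : ℝ) : Matrix (Fin (N + 1)) (Fin (N + 1)) ℝ :=
  Matrix.diagonal fun n : Fin (N + 1) => a - ((n : ℕ) * Real.pi) ^ 2

/-- The row vector `C = (1, √2, √2, …, √2)`. -/
noncomputable def Cmat (N : ℕ) : Matrix (Fin 1) (Fin (N + 1)) ℝ :=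
  Matrix.of fun _ j => if (j : ℕ) = 0 then (1 : ℝ) else Real.sqrt 2

set_option maxHeartbeats 2000000 in
/-- modal formulation of the exponential convergence of the state
observer error.  Given the spectral gap `a - (nπ)² < -δ` for `n > N` and the Lyapunov
LMI for `A + LC`, any modal solution `(ẽₙ)` (high modes decaying freely, low modes
solving `ē̇ = (A+LC)ē + Lζ` with `ζ = √2 Σ_{n>N} ẽₙ`) satisfies
`(Σₙ ẽₙ(t)²)^{1/2} ≤ M₂ e^{-δt} (Σₙ cₙ²)^{1/2}` with `M₂` depending only on
`a, δ, N, L, Q`. -/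
theorem stmt10 (a δ : ℝ) (N : ℕ) (hδ : 0 < δ)
    (hN : ∀ n : ℕ, N < n → a - (n * Real.pi) ^ 2 < -δ)
    (L : Matrix (Fin (N + 1)) (Fin 1) ℝ)
    (Q : Matrix (Fin (N + 1)) (Fin (N + 1)) ℝ) (hQ : Q.PosDef)
    (hLyap : (-(Q * (Amat N a + L * Cmat N) + (Amat N a + L * Cmat N)ᵀ * Q
      + (2 * δ) • Q)).PosDef) :
    ∃ M₂ > 0, ∀ (c : ℕ → ℝ) (e : ℕ → ℝ → ℝ),
      Summable (fun n => (c n) ^ 2) →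
      (∀ n, e n 0 = c n) →
      (∀ n, N < n → ∀ t, 0 ≤ t → e n t = c n * Real.exp ((a - (n * Real.pi) ^ 2) * t)) →
      ContinuousOn (fun t => (fun i : Fin (N + 1) => e i t)) (Set.Ici 0) →
      (∀ t, 0 < t → HasDerivAt (fun s => (fun i : Fin (N + 1) => e i s))
        ((Amat N a + L * Cmat N).mulVec (fun i : Fin (N + 1) => e i t)
          + (Real.sqrt 2 * ∑' n : {n : ℕ // N < n}, e n t) • (fun i => L i 0)) t) →
      ∀ t, 0 ≤ t →
        Real.sqrt (∑' n, (e n t) ^ 2)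
          ≤ M₂ * Real.exp (-δ * t) * Real.sqrt (∑' n, (c n) ^ 2) := by
  classical
  -- constants
  set M : Matrix (Fin (N+1)) (Fin (N+1)) ℝ := Amat N a + L * Cmat N with hM
  set R : Matrix (Fin (N+1)) (Fin (N+1)) ℝ := -(Q * M + Mᵀ * Q + (2 * δ) • Q) with hR
  obtain ⟨mQ, hmQ, hmQle⟩ := posdef_lower Q hQ
  obtain ⟨εR, hεR, hεRle⟩ := posdef_lower R hLyap
  set MQ : ℝ := ∑ i, ∑ j, |Q i j| with hMQ
  set l : Fin (N+1) → ℝ := fun i => L i 0 with hl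
  set q : Fin (N+1) → ℝ := Q.mulVec l with hq
  set K : ℝ := (q ⬝ᵥ q) / εR with hK
  have hKnn : 0 ≤ K := div_nonneg (by
    simp only [dotProduct]
    exact Finset.sum_nonneg fun i _ => mul_self_nonneg _) hεR.le
  set lam : ℕ → ℝ := fun n => (a + δ) - ((n:ℝ) * Real.pi) ^ 2 with hlamdef
  have hlamS : ∀ n : ℕ, N < n → lam n < 0 := by
    intro n hn
    have := hN n hn
    rw [hlamdef]
    simp only
    linarith
  set Λ : ℝ := ((N+1:ℕ) * Real.pi)^2 - (a + δ) with hΛdef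
  have hΛ : 0 < Λ := by
    have := hN (N+1) (by omega)
    rw [hΛdef]
    push_cast
    push_cast at this
    linarith
  have hlamle : ∀ n : {n : ℕ // N < n}, lam n ≤ -Λ := by
    rintro ⟨n, hn⟩
    rw [hlamdef, hΛdef]
    simp only
    have h1 : ((N+1:ℕ):ℝ) ≤ (n:ℝ) := by exact_mod_cast hn
    have h2 : (((N:ℕ)+1:ℝ) * Real.pi)^2 ≤ ((n:ℝ) * Real.pi)^2 := by
      have hπ := Real.pi_pos
      have h0 : (0:ℝ) ≤ ((N:ℕ)+1:ℝ) * Real.pi := by positivity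
      apply pow_le_pow_left₀ h0
      push_cast at h1
      nlinarith
    push_cast at h2 ⊢
    linarith
  have hCGsum : Summable fun n : {n : ℕ // N < n} => (2 * ((((n:ℕ):ℝ) * Real.pi)^2 - (a + δ)))⁻¹ := by
    have h := summable_inv_quad (a + δ) N (fun n hn => by have := hN n hn; linarith)
    have h2 := h.div_const 2
    apply h2.congr
    intro n
    rw [div_eq_mul_inv, ← mul_inv]
    ring_nf
  set CG : ℝ := ∑' n : {n : ℕ // N < n}, (2 * ((((n:ℕ):ℝ) * Real.pi)^2 - (a + δ)))⁻¹ with hCG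
  have hCGnn : 0 ≤ CG := tsum_nonneg fun ⟨n, hn⟩ => by
    have := hlamS n hn
    rw [hlamdef] at this
    simp only at this
    have h2 : 0 < ((n:ℝ) * Real.pi)^2 - (a + δ) := by linarith
    positivity
  set A : ℝ := (MQ + 2 * K * CG) / mQ + 1 with hA
  have hMQnn : 0 ≤ MQ := Finset.sum_nonneg fun i _ => Finset.sum_nonneg fun j _ => abs_nonneg _
  have hA1 : 1 ≤ A := by
    rw [hA]
    have : 0 ≤ (MQ + 2 * K * CG) / mQ := by positivity
    linarith
  refine ⟨Real.sqrt A, Real.sqrt_pos.2 (by linarith), ?_⟩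
  intro c e hc he0 he2 hcont hderiv t ht0
  -- basic quantities
  set cN : ℝ := ∑' n, (c n)^2 with hcN
  have hcNnn : 0 ≤ cN := tsum_nonneg fun n => sq_nonneg _
  set E : ℝ → Fin (N+1) → ℝ := fun s i => e i s with hE
  set V : ℝ → ℝ := fun s => E s ⬝ᵥ Q.mulVec (E s) with hV
  set z : ℝ → ℝ := fun s => Real.sqrt 2 * ∑' n : {n : ℕ // N < n}, e n s with hz
  set D : ℝ → Fin (N+1) → ℝ := fun s => M.mulVec (E s) + z s • l with hD
  set P : ℝ → ℝ := fun s => ∑' n : {n : ℕ // N < n}, Real.exp (2 * lam n * s) with hP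
  set G : ℝ → ℝ := fun s => ∑' n : {n : ℕ // N < n}, Real.exp (2 * lam n * s) / (2 * lam n)
    with hG
  set B : ℝ := 2 * K * cN with hB
  have hBnn : 0 ≤ B := by positivity
  -- summability of exp sums
  have hPsum : ∀ s : ℝ, 0 < s →
      Summable fun n : {n : ℕ // N < n} => Real.exp (2 * lam n * s) := by
    intro s hs
    have h := (summable_exp_quad (a + δ) (2 * s) (by linarith)).subtype {n : ℕ | N < n}
    apply h.congr
    intro n
    simp only [Function.comp]
    congr 1
    rw [hlamdef]
    ring
  -- V as explicit sum
  have hVeq : V = fun x => ∑ i : Fin (N+1), e i x * ∑ j : Fin (N+1), Q i j * e j x := by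
    funext x
    rw [hV]
    simp only [dotProduct, Matrix.mulVec, hE]
  -- derivative of V
  have hVderiv : ∀ s : ℝ, 0 < s →
      HasDerivAt V (D s ⬝ᵥ Q.mulVec (E s) + E s ⬝ᵥ Q.mulVec (D s)) s := by
    intro s hs
    have hda : HasDerivAt (fun x => (fun i : Fin (N+1) => e i x)) (D s) s := hderiv s hs
    have hEc : ∀ i : Fin (N+1), HasDerivAt (fun x => e i x) (D s i) s := fun i =>
      hasDerivAt_pi.1 hda i
    have hsum : HasDerivAt
        (fun x => ∑ i : Fin (N+1), e i x * ∑ j : Fin (N+1), Q i j * e j x)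
        (∑ i : Fin (N+1), (D s i * (∑ j : Fin (N+1), Q i j * e j s)
          + e i s * ∑ j : Fin (N+1), Q i j * D s j)) s := by
      apply HasDerivAt.fun_sum
      intro i _
      have h1 : HasDerivAt (fun x => ∑ j : Fin (N+1), Q i j * e j x)
          (∑ j : Fin (N+1), Q i j * D s j) s :=
        HasDerivAt.fun_sum (fun j _ => (hEc j).const_mul (Q i j))
      exact (hEc i).mul h1
    have hdeq : D s ⬝ᵥ Q.mulVec (E s) + E s ⬝ᵥ Q.mulVec (D s)
        = ∑ i : Fin (N+1), (D s i * (∑ j : Fin (N+1), Q i j * e j s)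
          + e i s * ∑ j : Fin (N+1), Q i j * D s j) := by
      simp only [dotProduct, Matrix.mulVec, hE, Finset.sum_add_distrib]
    rw [hVeq, hdeq]
    exact hsum
  -- quadratic form inequality
  have hQsym : Qᵀ = Q := by
    have h := hQ.1
    rw [Matrix.IsHermitian] at h
    simpa using h
  have hVbound : ∀ s : ℝ, 0 < s →
      D s ⬝ᵥ Q.mulVec (E s) + E s ⬝ᵥ Q.mulVec (D s)
        ≤ -(2 * δ) * V s + K * (z s)^2 := by
    intro s hs
    have hid : D s ⬝ᵥ Q.mulVec (E s) + E s ⬝ᵥ Q.mulVec (D s)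
        = E s ⬝ᵥ ((Mᵀ * Q + Q * M).mulVec (E s)) + 2 * z s * (q ⬝ᵥ E s) := by
      have hDs : D s = M.mulVec (E s) + z s • l := rfl
      rw [hDs]
      rw [add_dotProduct, smul_dotProduct, Matrix.mulVec_add,
        Matrix.mulVec_smul, dotProduct_add, dotProduct_smul]
      rw [mulVec_dot M (E s) (Q.mulVec (E s)), Matrix.mulVec_mulVec, Matrix.mulVec_mulVec]
      rw [Matrix.add_mulVec, dotProduct_add]
      have h1 : l ⬝ᵥ Q.mulVec (E s) = q ⬝ᵥ E s := by
        rw [Matrix.dotProduct_mulVec, ← Matrix.mulVec_transpose, hQsym, hq]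
      have h2 : E s ⬝ᵥ Q.mulVec l = q ⬝ᵥ E s := by
        rw [dotProduct_comm, hq]
      rw [h1, h2]
      simp only [smul_eq_mul]
      ring
    have hQM : Mᵀ * Q + Q * M = -R - (2*δ) • Q := by
      rw [hR]
      abel
    have hlmi : E s ⬝ᵥ ((Mᵀ * Q + Q * M).mulVec (E s))
        = -(E s ⬝ᵥ R.mulVec (E s)) - (2*δ) * (E s ⬝ᵥ Q.mulVec (E s)) := by
      rw [hQM, Matrix.sub_mulVec, Matrix.neg_mulVec, Matrix.smul_mulVec,
        dotProduct_sub, dotProduct_neg, dotProduct_smul, smul_eq_mul]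
    have h3 : εR * (E s ⬝ᵥ E s) ≤ E s ⬝ᵥ R.mulVec (E s) := hεRle _
    have h4 : (2 * z s * (q ⬝ᵥ E s)) * εR ≤ εR^2 * (E s ⬝ᵥ E s) + (q ⬝ᵥ q) * (z s)^2 := by
      have hpt : ∀ i : Fin (N+1), (2 * z s * (q i * E s i)) * εR
          ≤ εR^2 * (E s i * E s i) + (q i * q i) * (z s)^2 := fun i => by
        nlinarith [sq_nonneg (εR * E s i - z s * q i)]
      have e1 : (2 * z s * (q ⬝ᵥ E s)) * εR
          = ∑ i : Fin (N+1), (2 * z s * (q i * E s i)) * εR := by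
        simp only [dotProduct, Finset.mul_sum, Finset.sum_mul]
      have e2 : εR^2 * (E s ⬝ᵥ E s) + (q ⬝ᵥ q) * (z s)^2
          = ∑ i : Fin (N+1), (εR^2 * (E s i * E s i) + (q i * q i) * (z s)^2) := by
        simp only [dotProduct, Finset.mul_sum, Finset.sum_mul,
          Finset.sum_add_distrib]
      rw [e1, e2]
      exact Finset.sum_le_sum fun i _ => hpt i
    have h6 : K * (z s)^2 * εR = (q ⬝ᵥ q) * (z s)^2 := by
      rw [hK]
      field_simp
    have h5 : 2 * z s * (q ⬝ᵥ E s) ≤ εR * (E s ⬝ᵥ E s) + K * (z s)^2 := by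
      nlinarith [h4, h6, hεR]
    have hVs : V s = E s ⬝ᵥ Q.mulVec (E s) := rfl
    rw [hid, hlmi, hVs]
    linarith
  -- zeta bound
  have hsubc : (∑' n : {n : ℕ // N < n}, (c n)^2) ≤ cN := by
    have h0 : (∑' n : {n : ℕ // N < n}, (c n)^2)
        = ∑' n : ℕ, ({n : ℕ | N < n}).indicator (fun n => (c n)^2) n :=
      tsum_subtype {n : ℕ | N < n} (fun n => (c n)^2)
    rw [h0, hcN]
    apply Summable.tsum_le_tsum _ (hc.indicator _) hc
    intro n
    exact Set.indicator_le_self' (fun _ _ => sq_nonneg _) n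
  have hsubcS : Summable fun n : {n : ℕ // N < n} => (c n)^2 :=
    (hc.subtype {n : ℕ | N < n}).congr (fun n => rfl)
  have hzbound : ∀ s : ℝ, 0 < s →
      (z s)^2 ≤ 2 * cN * (Real.exp (-(2*δ) * s) * P s) := by
    intro s hs
    have hg2 : Summable fun n : {n : ℕ // N < n} =>
        (Real.exp (((a) - (((n:ℕ):ℝ) * Real.pi)^2) * s))^2 := by
      apply ((hPsum s hs).mul_left (Real.exp (-(2*δ) * s))).congr
      rintro ⟨n, hn⟩
      rw [← Real.exp_add, sq, ← Real.exp_add]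
      congr 1
      rw [hlamdef]
      ring
    have habs : Summable fun n : {n : ℕ // N < n} =>
        |c n| * |Real.exp (((a) - (((n:ℕ):ℝ) * Real.pi)^2) * s)| := by
      apply Summable.of_nonneg_of_le (fun n => by positivity) _ ((hsubcS.add hg2).div_const 2)
      rintro ⟨n, hn⟩
      have h1 := sq_nonneg (|c n| - |Real.exp (((a) - ((n:ℝ) * Real.pi)^2) * s)|)
      have h2 : |c n|^2 = (c n)^2 := sq_abs _
      have h3 : |Real.exp (((a) - ((n:ℝ) * Real.pi)^2) * s)|^2
          = (Real.exp (((a) - ((n:ℝ) * Real.pi)^2) * s))^2 := sq_abs _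
      simp only
      nlinarith
    have hT : z s = Real.sqrt 2 * ∑' n : {n : ℕ // N < n},
        c n * Real.exp (((a) - (((n:ℕ):ℝ) * Real.pi)^2) * s) := by
      rw [hz]
      simp only
      congr 1
      apply tsum_congr
      rintro ⟨n, hn⟩
      exact he2 n hn s hs.le
    have hTabs : |∑' n : {n : ℕ // N < n},
        c n * Real.exp (((a) - (((n:ℕ):ℝ) * Real.pi)^2) * s)|
        ≤ ∑' n : {n : ℕ // N < n},
          |c n| * |Real.exp (((a) - (((n:ℕ):ℝ) * Real.pi)^2) * s)| := by
      have := norm_tsum_le_tsum_norm (f := fun n : {n : ℕ // N < n} =>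
        c n * Real.exp (((a) - (((n:ℕ):ℝ) * Real.pi)^2) * s)) (by
          apply habs.congr
          intro n
          rw [Real.norm_eq_abs, abs_mul])
      rw [Real.norm_eq_abs] at this
      apply le_trans this
      apply le_of_eq
      apply tsum_congr
      intro n
      rw [Real.norm_eq_abs, abs_mul]
    have hcs := tsum_cs (fun n : {n : ℕ // N < n} => c n)
      (fun n : {n : ℕ // N < n} => Real.exp (((a) - (((n:ℕ):ℝ) * Real.pi)^2) * s)) hsubcS hg2
    have hg2eq : (∑' n : {n : ℕ // N < n},
        (Real.exp (((a) - (((n:ℕ):ℝ) * Real.pi)^2) * s))^2)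
        = Real.exp (-(2*δ) * s) * P s := by
      rw [hP, ← tsum_mul_left]
      apply tsum_congr
      rintro ⟨n, hn⟩
      rw [sq, ← Real.exp_add, ← Real.exp_add]
      congr 1
      rw [hlamdef]
      ring
    have hPnn : 0 ≤ P s := tsum_nonneg fun n => Real.exp_nonneg _
    have hexpnn : (0:ℝ) ≤ Real.exp (-(2*δ) * s) := Real.exp_nonneg _
    rw [hT, mul_pow, Real.sq_sqrt (by norm_num : (0:ℝ) ≤ 2)]
    have hT2 : (∑' n : {n : ℕ // N < n},
        c n * Real.exp (((a) - (((n:ℕ):ℝ) * Real.pi)^2) * s))^2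
        ≤ cN * (Real.exp (-(2*δ) * s) * P s) := by
      have h1 : (∑' n : {n : ℕ // N < n},
          c n * Real.exp (((a) - (((n:ℕ):ℝ) * Real.pi)^2) * s))^2
          ≤ (∑' n : {n : ℕ // N < n},
            |c n| * |Real.exp (((a) - (((n:ℕ):ℝ) * Real.pi)^2) * s)|)^2 := by
        rw [← sq_abs]
        apply pow_le_pow_left₀ (abs_nonneg _) hTabs
      apply le_trans h1
      apply le_trans hcs
      rw [hg2eq]
      apply mul_le_mul_of_nonneg_right hsubc (by positivity)
    nlinarith
  -- G facts
  have hGsumm : ∀ s : ℝ, 0 ≤ s →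
      Summable fun n : {n : ℕ // N < n} => Real.exp (2 * lam n * s) / (2 * lam n) := by
    intro s hs
    apply Summable.of_abs
    apply Summable.of_nonneg_of_le (fun n => abs_nonneg _) _ hCGsum
    rintro ⟨n, hn⟩
    have hl : lam n < 0 := hlamS n hn
    have hx : 0 < ((n:ℝ) * Real.pi)^2 - (a + δ) := by rw [hlamdef] at hl; simp only at hl; linarith
    have h2 : |2 * lam n| = 2 * (((n:ℝ) * Real.pi)^2 - (a + δ)) := by
      rw [abs_of_neg (by linarith : 2 * lam n < 0), hlamdef]; ring
    rw [abs_div, h2, abs_of_pos (Real.exp_pos _)]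
    rw [div_le_iff₀ (by linarith), inv_mul_cancel₀ (by linarith : 2 * (((n:ℝ) * Real.pi)^2 - (a + δ)) ≠ 0)]
    apply Real.exp_le_one_iff.2
    nlinarith
  have hGnonpos : ∀ s : ℝ, 0 ≤ s → G s ≤ 0 := by
    intro s hs
    apply tsum_nonpos
    rintro ⟨n, hn⟩
    have hl : lam n < 0 := hlamS n hn
    exact div_nonpos_iff.2 (Or.inl ⟨Real.exp_nonneg _, by linarith⟩)
  have hGlower : ∀ s : ℝ, 0 ≤ s → -CG ≤ G s := by
    intro s hs
    have hterm : ∀ n : {n : ℕ // N < n},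
        -(2 * ((((n:ℕ):ℝ) * Real.pi)^2 - (a + δ)))⁻¹ ≤ Real.exp (2 * lam n * s) / (2 * lam n) := by
      rintro ⟨n, hn⟩
      have hl : lam n < 0 := hlamS n hn
      have hx : 0 < ((n:ℝ) * Real.pi)^2 - (a + δ) := by
        rw [hlamdef] at hl; simp only at hl; linarith
      have hrw : -(2 * (((n:ℝ) * Real.pi)^2 - (a + δ)))⁻¹ = 1 / (2 * lam n) := by
        rw [hlamdef]
        simp only
        rw [one_div, ← inv_neg]
        congr 1
        ring
      show -(2 * (((n:ℝ) * Real.pi)^2 - (a + δ)))⁻¹ ≤ _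
      rw [hrw]
      have hle : Real.exp (2 * lam n * s) ≤ 1 := Real.exp_le_one_iff.2 (by nlinarith)
      have : (0:ℝ) ≤ (Real.exp (2 * lam n * s) - 1) / (2 * lam n) :=
        div_nonneg_of_nonpos (by linarith) (by linarith)
      have heq : Real.exp (2 * lam n * s) / (2 * lam n) - 1 / (2 * lam n)
          = (Real.exp (2 * lam n * s) - 1) / (2 * lam n) := by ring
      linarith [heq ▸ this]
    have h := Summable.tsum_le_tsum hterm hCGsum.neg (hGsumm s hs)
    rw [tsum_neg] at h
    exact h
  -- continuity of V on [0,∞)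
  have hEi : ∀ i : Fin (N+1), ContinuousOn (fun s => e i s) (Set.Ici 0) := fun i =>
    (continuous_apply i).comp_continuousOn hcont
  have hVcont : ContinuousOn V (Set.Ici 0) := by
    rw [hVeq]
    apply continuousOn_finset_sum
    intro i _
    exact (hEi i).mul (continuousOn_finset_sum _ fun j _ => continuousOn_const.mul (hEi j))
  -- Gronwall
  have hmain : ∀ s : ℝ, 0 < s → V s ≤ Real.exp (-(2*δ)*s) * (MQ * cN + B * CG) := by
    intro T hT
    set Φ : ℝ → ℝ := fun s => Real.exp (2*δ*s) * V s - B * G s with hΦ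
    have hΦderiv : ∀ x : ℝ, 0 < x → HasDerivAt Φ
        (Real.exp (2*δ*x) * (2*δ) * V x
          + Real.exp (2*δ*x) * (D x ⬝ᵥ Q.mulVec (E x) + E x ⬝ᵥ Q.mulVec (D x))
          - B * P x) x := by
      intro x hx
      have h1 : HasDerivAt (fun s : ℝ => Real.exp (2*δ*s)) (Real.exp (2*δ*x) * (2*δ)) x := by
        have h0 : HasDerivAt (fun s : ℝ => 2*δ*s) (2*δ) x := by
          simpa using (hasDerivAt_id x).const_mul (2*δ)
        exact h0.exp
      have h2 := h1.mul (hVderiv x hx)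
      have h3 : HasDerivAt G (P x) x := by
        have h := hasDerivAt_G (fun n : {n : ℕ // N < n} => lam n) Λ hΛ hlamle hPsum x hx
        rw [hG, hP]
        exact h
      have h4 := h2.sub (h3.const_mul B)
      exact h4
    have hΦmono : ∀ s : ℝ, 0 < s → s ≤ T → Φ T ≤ Φ s := by
      intro s hs hsT
      rcases eq_or_lt_of_le hsT with rfl | hlt
      · exact le_refl _
      have hanti : AntitoneOn Φ (Set.Icc s T) := by
        apply antitoneOn_of_deriv_nonpos (convex_Icc s T)
        · intro x hx
          have hx0 : 0 < x := lt_of_lt_of_le hs hx.1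
          exact (hΦderiv x hx0).continuousAt.continuousWithinAt
        · intro x hx
          rw [interior_Icc] at hx
          exact (hΦderiv x (lt_trans hs hx.1)).differentiableAt.differentiableWithinAt
        · intro x hx
          rw [interior_Icc] at hx
          have hx0 : 0 < x := lt_trans hs hx.1
          rw [(hΦderiv x hx0).deriv]
          have hVb := hVbound x hx0
          have hzb := hzbound x hx0
          have hPnn : 0 ≤ P x := tsum_nonneg fun n => Real.exp_nonneg _
          have he1 : Real.exp (2*δ*x) * (K * (z x)^2)
              ≤ Real.exp (2*δ*x) * (K * (2 * cN * (Real.exp (-(2*δ)*x) * P x))) :=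
            mul_le_mul_of_nonneg_left (mul_le_mul_of_nonneg_left hzb hKnn)
              (Real.exp_nonneg _)
          have he2 : Real.exp (2*δ*x) * (K * (2 * cN * (Real.exp (-(2*δ)*x) * P x)))
              = B * P x := by
            calc Real.exp (2*δ*x) * (K * (2 * cN * (Real.exp (-(2*δ)*x) * P x)))
                = (K * (2 * cN) * P x) * (Real.exp (2*δ*x) * Real.exp (-(2*δ)*x)) := by ring
              _ = B * P x := by
                  rw [← Real.exp_add, (by ring : 2*δ*x + -(2*δ)*x = 0), Real.exp_zero, hB]
                  ring
          have hVb2 : Real.exp (2*δ*x) * (D x ⬝ᵥ Q.mulVec (E x) + E x ⬝ᵥ Q.mulVec (D x))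
              ≤ Real.exp (2*δ*x) * (-(2 * δ) * V x + K * (z x)^2) :=
            mul_le_mul_of_nonneg_left hVb (Real.exp_nonneg _)
          have hr : Real.exp (2*δ*x) * (-(2 * δ) * V x + K * (z x)^2)
              = -(Real.exp (2*δ*x) * (2*δ) * V x) + Real.exp (2*δ*x) * (K * (z x)^2) := by
            ring
          linarith
      exact hanti (Set.mem_Icc.2 ⟨le_refl s, hsT⟩) (Set.mem_Icc.2 ⟨hsT, le_refl T⟩) hsT
    have hlim : Filter.Tendsto (fun s => Real.exp (2*δ*s) * V s)
        (nhdsWithin 0 (Set.Ioi 0)) (nhds (V 0)) := by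
      have h1 : ContinuousWithinAt (fun s => Real.exp (2*δ*s) * V s) (Set.Ici 0) 0 := by
        apply ContinuousWithinAt.mul
        · exact (Real.continuous_exp.comp (continuous_const.mul continuous_id)).continuousWithinAt
        · exact hVcont 0 Set.self_mem_Ici
      have h2 := h1.tendsto
      have h3 : Real.exp (2*δ*0) * V 0 = V 0 := by simp
      rw [h3] at h2
      exact h2.mono_left (nhdsWithin_mono 0 Set.Ioi_subset_Ici_self)
    have hev : ∀ᶠ s in nhdsWithin 0 (Set.Ioi 0),
        Real.exp (2*δ*T) * V T - B * CG ≤ Real.exp (2*δ*s) * V s := by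
      filter_upwards [Ioc_mem_nhdsGT_of_mem (Set.mem_Ico.2 ⟨le_refl (0:ℝ), hT⟩)] with s hs
      have hmono := hΦmono s hs.1 hs.2
      rw [hΦ] at hmono
      simp only at hmono
      have hg1 : B * (-CG) ≤ B * G s := mul_le_mul_of_nonneg_left (hGlower s hs.1.le) hBnn
      have hg2 : B * G T ≤ 0 := mul_nonpos_of_nonneg_of_nonpos hBnn (hGnonpos T hT.le)
      linarith
    have hfinal : Real.exp (2*δ*T) * V T - B * CG ≤ V 0 := ge_of_tendsto hlim hev
    have hV0 : V 0 ≤ MQ * cN := by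
      have hqu := quad_upper Q (E 0)
      have hE0 : E 0 ⬝ᵥ E 0 ≤ cN := by
        have h1 : E 0 ⬝ᵥ E 0 = ∑ i : Fin (N+1), (c i)^2 := by
          simp only [dotProduct, hE, he0, sq]
        rw [h1, hcN]
        have h2 : ∑ i : Fin (N+1), (c (i:ℕ))^2 = ∑ i ∈ Finset.range (N+1), (c i)^2 :=
          Fin.sum_univ_eq_sum_range (fun i => (c i)^2) (N+1)
        rw [h2]
        exact Summable.sum_le_tsum _ (fun i _ => sq_nonneg _) hc
      calc V 0 = E 0 ⬝ᵥ Q.mulVec (E 0) := rfl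
        _ ≤ MQ * (E 0 ⬝ᵥ E 0) := hqu
        _ ≤ MQ * cN := mul_le_mul_of_nonneg_left hE0 hMQnn
    have hexp1 : Real.exp (-(2*δ)*T) * Real.exp (2*δ*T) = 1 := by
      rw [← Real.exp_add, (by ring : -(2*δ)*T + 2*δ*T = 0), Real.exp_zero]
    calc V T = Real.exp (-(2*δ)*T) * (Real.exp (2*δ*T) * V T) := by
          rw [← mul_assoc, hexp1, one_mul]
      _ ≤ Real.exp (-(2*δ)*T) * (MQ * cN + B * CG) := by
          apply mul_le_mul_of_nonneg_left _ (Real.exp_nonneg _)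
          linarith
  -- conclusion
  have h1A : (1:ℝ) ≤ Real.sqrt A := by
    rw [show (1:ℝ) = Real.sqrt 1 from (Real.sqrt_one).symm]
    exact Real.sqrt_le_sqrt hA1
  rcases eq_or_lt_of_le ht0 with rfl | htpos
  · have h0 : (∑' n, (e n 0)^2) = cN := by
      rw [hcN]
      exact tsum_congr fun n => by rw [he0]
    rw [h0]
    rw [mul_zero, Real.exp_zero, mul_one]
    nlinarith [Real.sqrt_nonneg cN, Real.sqrt_nonneg A]
  · have hμb : ∀ n, N < n → (e n t)^2 ≤ (c n)^2 * Real.exp (-(2*δ)*t) := by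
      intro n hn
      rw [he2 n hn t ht0, mul_pow]
      have h1 : (Real.exp ((a - ((n:ℝ)*Real.pi)^2)*t))^2
          = Real.exp (2*(a - ((n:ℝ)*Real.pi)^2)*t) := by
        rw [sq, ← Real.exp_add]
        congr 1
        ring
      rw [h1]
      apply mul_le_mul_of_nonneg_left _ (sq_nonneg _)
      apply Real.exp_le_exp.2
      have := hN n hn
      nlinarith
    have hsummE : Summable (fun n => (e n t)^2) := by
      rw [← summable_nat_add_iff (N+1)]
      apply Summable.of_nonneg_of_le (fun n => sq_nonneg _) (fun n => hμb _ (by omega))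
        (((summable_nat_add_iff (N+1)).2 hc).mul_right (Real.exp (-(2*δ)*t)))
    have hsplit : (∑' n, (e n t)^2)
        = (∑ i ∈ Finset.range (N+1), (e i t)^2) + ∑' n : ℕ, (e (n + (N+1)) t)^2 :=
      (Summable.sum_add_tsum_nat_add (N+1) hsummE).symm
    have hhead : (∑ i ∈ Finset.range (N+1), (e i t)^2) = E t ⬝ᵥ E t := by
      rw [← Fin.sum_univ_eq_sum_range (fun i => (e i t)^2) (N+1)]
      simp only [dotProduct, hE, sq]
    have hheadle : E t ⬝ᵥ E t ≤ Real.exp (-(2*δ)*t) * ((MQ + 2*K*CG) * cN) / mQ := by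
      have h1 := hmQle (E t)
      have h2 := hmain t htpos
      have h3 : MQ * cN + B * CG = (MQ + 2*K*CG) * cN := by rw [hB]; ring
      rw [h3] at h2
      rw [le_div_iff₀ hmQ]
      have h4 : V t = E t ⬝ᵥ Q.mulVec (E t) := rfl
      rw [h4] at h2
      linarith
    have htailsumm : Summable (fun n : ℕ => (e (n + (N+1)) t)^2) :=
      (summable_nat_add_iff (N+1)).2 hsummE
    have htail : (∑' n : ℕ, (e (n + (N+1)) t)^2) ≤ Real.exp (-(2*δ)*t) * cN := by
      have h1 : ∀ n : ℕ, (e (n+(N+1)) t)^2 ≤ (c (n+(N+1)))^2 * Real.exp (-(2*δ)*t) :=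
        fun n => hμb _ (by omega)
      have h2 := Summable.tsum_le_tsum h1 htailsumm
        (((summable_nat_add_iff (N+1)).2 hc).mul_right (Real.exp (-(2*δ)*t)))
      rw [tsum_mul_right] at h2
      have h5 : (∑' n : ℕ, (c (n+(N+1)))^2) ≤ cN := by
        rw [hcN, ← Summable.sum_add_tsum_nat_add (N+1) hc]
        have h6 : 0 ≤ ∑ i ∈ Finset.range (N+1), (c i)^2 :=
          Finset.sum_nonneg fun i _ => sq_nonneg _
        linarith
      calc (∑' n : ℕ, (e (n + (N+1)) t)^2)
          ≤ (∑' n : ℕ, (c (n+(N+1)))^2) * Real.exp (-(2*δ)*t) := h2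
        _ ≤ cN * Real.exp (-(2*δ)*t) :=
            mul_le_mul_of_nonneg_right h5 (Real.exp_nonneg _)
        _ = Real.exp (-(2*δ)*t) * cN := by ring
    have hAeq : Real.exp (-(2*δ)*t) * ((MQ + 2*K*CG) * cN) / mQ + Real.exp (-(2*δ)*t) * cN
        = Real.exp (-(2*δ)*t) * (A * cN) := by
      rw [hA]
      field_simp
    have htot : (∑' n, (e n t)^2) ≤ Real.exp (-(2*δ)*t) * (A * cN) := by
      rw [hsplit, hhead, ← hAeq]
      exact add_le_add hheadle htail
    have hs1 := Real.sqrt_le_sqrt htot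
    have hexp2 : Real.exp (-(2*δ)*t) = (Real.exp (-δ*t))^2 := by
      rw [sq, ← Real.exp_add]
      congr 1
      ring
    have hrhs : Real.sqrt (Real.exp (-(2*δ)*t) * (A * cN))
        = Real.sqrt A * Real.exp (-δ*t) * Real.sqrt cN := by
      rw [hexp2, Real.sqrt_mul (sq_nonneg _), Real.sqrt_sq (Real.exp_nonneg _),
        Real.sqrt_mul (by linarith : (0:ℝ) ≤ A)]
      ring
    calc Real.sqrt (∑' n, (e n t)^2) ≤ Real.sqrt (Real.exp (-(2*δ)*t) * (A * cN)) := hs1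
      _ = Real.sqrt A * Real.exp (-δ*t) * Real.sqrt cN := hrhs
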